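/- arXiv:2008.02375 — 9 statements merged into one kernel-verified Lean document; each statement's English description precedes it below -/
import Mathlib

section
/- Let G be a (simple, loopless) graph on a vertex set V satisfying the extension property: for all disjoint finite sets A, B ⊆ V there exists a vertex v ∉ A ∪ B adjacent to every vertex of A and to no vertex of B. Then for every partition of V into two sets R and S, at least one of the parts P ∈ {R, S} itself satisfies the extension property within P: for all disjoint finite A, B ⊆ P there exists v ∈ P \ (A ∪ B) adjacent to every vertex of A and to no vertex of B. -/
theorem rado_partition_extension {V : Type*} [Countable V] [DecidableEq V] (G : SimpleGraph V)
    (hext : ∀ A B : Finset V, Disjoint A B →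
      ∃ v, v ∉ A ∪ B ∧ (∀ a ∈ A, G.Adj v a) ∧ ∀ b ∈ B, ¬ G.Adj v b)
    (R S : Set V) (hdisj : Disjoint R S) (hcover : R ∪ S = Set.univ) :
    (∀ A B : Finset V, ↑A ⊆ R → ↑B ⊆ R → Disjoint A B →
      ∃ v ∈ R, v ∉ A ∪ B ∧ (∀ a ∈ A, G.Adj v a) ∧ ∀ b ∈ B, ¬ G.Adj v b) ∨
    (∀ A B : Finset V, ↑A ⊆ S → ↑B ⊆ S → Disjoint A B →
      ∃ v ∈ S, v ∉ A ∪ B ∧ (∀ a ∈ A, G.Adj v a) ∧ ∀ b ∈ B, ¬ G.Adj v b) := by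
  by_contra h
  push_neg at h
  obtain ⟨⟨A₁, B₁, hA₁, hB₁, hd₁, h₁⟩, ⟨A₂, B₂, hA₂, hB₂, hd₂, h₂⟩⟩ := h
  have d12 : Disjoint A₁ B₂ :=
    Finset.disjoint_coe.mp (Set.disjoint_of_subset hA₁ hB₂ hdisj)
  have d21 : Disjoint A₂ B₁ :=
    Finset.disjoint_coe.mp (Set.disjoint_of_subset hA₂ hB₁ hdisj.symm)
  have hdisjF : Disjoint (A₁ ∪ A₂) (B₁ ∪ B₂) := by
    simp only [Finset.disjoint_union_left, Finset.disjoint_union_right]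
    exact ⟨⟨hd₁, d21⟩, d12, hd₂⟩
  obtain ⟨v, hv, hadj, hnadj⟩ := hext (A₁ ∪ A₂) (B₁ ∪ B₂) hdisjF
  have hvRS : v ∈ R ∪ S := hcover ▸ Set.mem_univ v
  rcases hvRS with hvR | hvS
  · obtain ⟨b, hb, hba⟩ := h₁ v hvR
      (fun h' => hv (by simp [Finset.mem_union] at h' ⊢; tauto))
      (fun a ha => hadj a (Finset.mem_union_left _ ha))
    exact hnadj b (Finset.mem_union_left _ hb) hba
  · obtain ⟨b, hb, hba⟩ := h₂ v hvS
      (fun h' => hv (by simp [Finset.mem_union] at h' ⊢; tauto))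
      (fun a ha => hadj a (Finset.mem_union_right _ ha))
    exact hnadj b (Finset.mem_union_right _ hb) hba
end

section
/- Let G be a countable graph with the extension property (for all disjoint finite A, B ⊆ V there is a vertex adjacent to all of A and none of B). Then for every partition of the vertex set into two parts, at least one part induces a subgraph isomorphic to G. -/
noncomputable section RadoAux

variable {V W : Type*}

/-- Extension property. -/
def RadoExt [DecidableEq V] (G : SimpleGraph V) : Prop :=
  ∀ A B : Finset V, Disjoint A B →
    ∃ v, v ∉ A ∪ B ∧ (∀ a ∈ A, G.Adj v a) ∧ ∀ b ∈ B, ¬ G.Adj v b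

/-- A finite partial isomorphism, recorded as a list of pairs. -/
def RadoGood (G : SimpleGraph V) (H : SimpleGraph W) (L : List (V × W)) : Prop :=
  ∀ p ∈ L, ∀ q ∈ L, (p.1 = q.1 ↔ p.2 = q.2) ∧ (G.Adj p.1 q.1 ↔ H.Adj p.2 q.2)

lemma radoGood_nil (G : SimpleGraph V) (H : SimpleGraph W) : RadoGood G H [] := by
  intro p hp; simp at hp

lemma radoGood_swap {G : SimpleGraph V} {H : SimpleGraph W} {L : List (V × W)}
    (h : RadoGood G H L) : RadoGood H G (L.map Prod.swap) := by
  intro p hp q hq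
  simp only [List.mem_map] at hp hq
  obtain ⟨p', hp', rfl⟩ := hp
  obtain ⟨q', hq', rfl⟩ := hq
  obtain ⟨h1, h2⟩ := h p' hp' q' hq'
  exact ⟨h1.symm, h2.symm⟩

lemma radoGood_cons {G : SimpleGraph V} {H : SimpleGraph W} {L : List (V × W)}
    (hL : RadoGood G H L) {v : V} {w : W}
    (key : ∀ r ∈ L, (v = r.1 ↔ w = r.2) ∧ (G.Adj v r.1 ↔ H.Adj w r.2)) :
    RadoGood G H ((v, w) :: L) := by
  intro p hp q hq
  rcases List.mem_cons.1 hp with rfl | hp <;> rcases List.mem_cons.1 hq with rfl | hq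
  · exact ⟨by simp, iff_of_false (G.irrefl) (H.irrefl)⟩
  · exact key q hq
  · obtain ⟨h1, h2⟩ := key p hp
    exact ⟨by rw [eq_comm, h1, eq_comm], by rw [G.adj_comm, h2, H.adj_comm]⟩
  · exact hL p hp q hq

lemma rado_extend_left [DecidableEq V] [DecidableEq W] {G : SimpleGraph V} {H : SimpleGraph W}
    (hH : RadoExt H) {L : List (V × W)} (hL : RadoGood G H L) (v : V) :
    ∃ w, RadoGood G H ((v, w) :: L) := by
  classical
  by_cases hv : ∃ p ∈ L, p.1 = v
  · obtain ⟨p, hp, hpv⟩ := hv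
    refine ⟨p.2, radoGood_cons hL fun r hr => ?_⟩
    obtain ⟨h1, h2⟩ := hL p hp r hr
    rw [← hpv]
    exact ⟨h1, h2⟩
  · push_neg at hv
    set A : Finset W := (L.toFinset.filter fun p => G.Adj v p.1).image Prod.snd with hA
    set B : Finset W := (L.toFinset.filter fun p => ¬ G.Adj v p.1).image Prod.snd with hB
    have hmemA : ∀ w, w ∈ A ↔ ∃ p ∈ L, G.Adj v p.1 ∧ p.2 = w := by
      intro w; simp [hA, Finset.mem_image, Finset.mem_filter, List.mem_toFinset, and_assoc]
    have hmemB : ∀ w, w ∈ B ↔ ∃ p ∈ L, ¬ G.Adj v p.1 ∧ p.2 = w := by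
      intro w; simp [hB, Finset.mem_image, Finset.mem_filter, List.mem_toFinset, and_assoc]
    have hd : Disjoint A B := by
      rw [Finset.disjoint_left]
      intro w hwA hwB
      obtain ⟨p, hp, hap, hpw⟩ := (hmemA w).1 hwA
      obtain ⟨q, hq, haq, hqw⟩ := (hmemB w).1 hwB
      exact haq (((hL p hp q hq).1.2 (hpw.trans hqw.symm)) ▸ hap)
    obtain ⟨w, hw, hwA, hwB⟩ := hH A B hd
    refine ⟨w, radoGood_cons hL fun r hr => ?_⟩
    constructor
    · constructor
      · intro h; exact absurd h.symm (hv r hr)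
      · intro h
        exfalso; apply hw
        rw [Finset.mem_union]
        by_cases hadj : G.Adj v r.1
        · exact Or.inl ((hmemA w).2 ⟨r, hr, hadj, h.symm⟩)
        · exact Or.inr ((hmemB w).2 ⟨r, hr, hadj, h.symm⟩)
    · constructor
      · intro hadj; exact hwA r.2 ((hmemA r.2).2 ⟨r, hr, hadj, rfl⟩)
      · intro hadj
        by_contra hn
        exact hwB r.2 ((hmemB r.2).2 ⟨r, hr, hn, rfl⟩) hadj

lemma rado_extend_right [DecidableEq V] [DecidableEq W] {G : SimpleGraph V} {H : SimpleGraph W}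
    (hG : RadoExt G) {L : List (V × W)} (hL : RadoGood G H L) (w : W) :
    ∃ u, RadoGood G H ((u, w) :: L) := by
  obtain ⟨u, hu⟩ := rado_extend_left hG (radoGood_swap hL) w
  refine ⟨u, ?_⟩
  have := radoGood_swap hu
  simpa [Function.comp] using this

variable [DecidableEq V] [DecidableEq W] {G : SimpleGraph V} {H : SimpleGraph W}

noncomputable def radoChain (hG : RadoExt G) (hH : RadoExt H) (eV : ℕ → V) (eW : ℕ → W) :
    ℕ → {L : List (V × W) // RadoGood G H L}
  | 0 => ⟨[], radoGood_nil G H⟩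
  | n + 1 =>
    ⟨(Classical.choose (rado_extend_right hG
        (Classical.choose_spec (rado_extend_left hH (radoChain hG hH eV eW n).2 (eV n))) (eW n)),
      eW n) ::
      (eV n, Classical.choose (rado_extend_left hH (radoChain hG hH eV eW n).2 (eV n))) ::
      (radoChain hG hH eV eW n).1,
     Classical.choose_spec (rado_extend_right hG
        (Classical.choose_spec (rado_extend_left hH (radoChain hG hH eV eW n).2 (eV n))) (eW n))⟩

lemma radoChain_succ (hG : RadoExt G) (hH : RadoExt H) (eV : ℕ → V) (eW : ℕ → W) (n : ℕ) :
    ∃ u w, (radoChain hG hH eV eW (n + 1)).1 =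
      (u, eW n) :: (eV n, w) :: (radoChain hG hH eV eW n).1 :=
  ⟨_, _, rfl⟩

lemma radoChain_mono (hG : RadoExt G) (hH : RadoExt H) (eV : ℕ → V) (eW : ℕ → W)
    {n m : ℕ} (hnm : n ≤ m) {p : V × W} (hp : p ∈ (radoChain hG hH eV eW n).1) :
    p ∈ (radoChain hG hH eV eW m).1 := by
  induction m, hnm using Nat.le_induction with
  | base => exact hp
  | succ m hm ih =>
    obtain ⟨u, w, he⟩ := radoChain_succ hG hH eV eW m
    rw [he]
    exact List.mem_cons_of_mem _ (List.mem_cons_of_mem _ ih)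

lemma radoChain_compat (hG : RadoExt G) (hH : RadoExt H) (eV : ℕ → V) (eW : ℕ → W)
    {n m : ℕ} {p q : V × W} (hp : p ∈ (radoChain hG hH eV eW n).1)
    (hq : q ∈ (radoChain hG hH eV eW m).1) :
    (p.1 = q.1 ↔ p.2 = q.2) ∧ (G.Adj p.1 q.1 ↔ H.Adj p.2 q.2) :=
  (radoChain hG hH eV eW (max n m)).2 p
    (radoChain_mono hG hH eV eW (le_max_left n m) hp) q
    (radoChain_mono hG hH eV eW (le_max_right n m) hq)

lemma rado_iso_of_ext {V W : Type*} [Countable V] [Countable W] [DecidableEq V] [DecidableEq W]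
    (G : SimpleGraph V) (H : SimpleGraph W) (hG : RadoExt G) (hH : RadoExt H) :
    Nonempty (G ≃g H) := by
  have hVne : Nonempty V := ⟨(hG ∅ ∅ disjoint_bot_left).choose⟩
  have hWne : Nonempty W := ⟨(hH ∅ ∅ disjoint_bot_left).choose⟩
  obtain ⟨eV, heV⟩ := exists_surjective_nat V
  obtain ⟨eW, heW⟩ := exists_surjective_nat W
  set C := radoChain hG hH eV eW with hC
  have htot : ∀ v : V, ∃ w, ∃ n, (v, w) ∈ (C n).1 := by
    intro v
    obtain ⟨k, rfl⟩ := heV v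
    obtain ⟨u, w, he⟩ := radoChain_succ hG hH eV eW k
    exact ⟨w, k + 1, by rw [hC, he]; simp⟩
  have hsur : ∀ w : W, ∃ v, ∃ n, (v, w) ∈ (C n).1 := by
    intro w
    obtain ⟨k, rfl⟩ := heW w
    obtain ⟨u, w', he⟩ := radoChain_succ hG hH eV eW k
    exact ⟨u, k + 1, by rw [hC, he]; simp⟩
  set φ : V → W := fun v => Classical.choose (htot v) with hφ
  set ψ : W → V := fun w => Classical.choose (hsur w) with hψ
  have hφs : ∀ v, ∃ n, (v, φ v) ∈ (C n).1 := fun v => Classical.choose_spec (htot v)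
  have hψs : ∀ w, ∃ n, (ψ w, w) ∈ (C n).1 := fun w => Classical.choose_spec (hsur w)
  have li : Function.LeftInverse ψ φ := by
    intro v
    obtain ⟨n, hn⟩ := hφs v
    obtain ⟨m, hm⟩ := hψs (φ v)
    exact ((radoChain_compat hG hH eV eW hm hn).1.2 rfl)
  have ri : Function.RightInverse ψ φ := by
    intro w
    obtain ⟨n, hn⟩ := hψs w
    obtain ⟨m, hm⟩ := hφs (ψ w)
    exact ((radoChain_compat hG hH eV eW hm hn).1.1 rfl)
  refine ⟨⟨⟨φ, ψ, li, ri⟩, ?_⟩⟩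
  intro a b
  obtain ⟨n, hn⟩ := hφs a
  obtain ⟨m, hm⟩ := hφs b
  exact ((radoChain_compat hG hH eV eW hn hm).2).symm

end RadoAux

theorem rado_indivisible {V : Type*} [Countable V] [DecidableEq V] (G : SimpleGraph V)
    (hext : ∀ A B : Finset V, Disjoint A B →
      ∃ v, v ∉ A ∪ B ∧ (∀ a ∈ A, G.Adj v a) ∧ ∀ b ∈ B, ¬ G.Adj v b)
    (R S : Set V) (hdisj : Disjoint R S) (hcover : R ∪ S = Set.univ) :
    Nonempty (G.induce R ≃g G) ∨ Nonempty (G.induce S ≃g G) := by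
  classical
  have hGext : RadoExt G := hext
  by_cases hR : RadoExt (G.induce R)
  · exact Or.inl (rado_iso_of_ext _ _ hR hGext)
  · refine Or.inr (rado_iso_of_ext _ _ ?_ hGext)
    rw [RadoExt] at hR
    push_neg at hR
    obtain ⟨A, B, hAB, hfail⟩ := hR
    intro A' B' hAB'
    set A₀ : Finset V := A.image Subtype.val ∪ A'.image Subtype.val with hA₀
    set B₀ : Finset V := B.image Subtype.val ∪ B'.image Subtype.val with hB₀
    have hdisj0 : Disjoint A₀ B₀ := by
      rw [Finset.disjoint_left]
      rintro x hx hx'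
      rw [hA₀, Finset.mem_union, Finset.mem_image, Finset.mem_image] at hx
      rw [hB₀, Finset.mem_union, Finset.mem_image, Finset.mem_image] at hx'
      rcases hx with ⟨a, ha, rfl⟩ | ⟨a, ha, rfl⟩ <;>
        rcases hx' with ⟨b, hb, hb'⟩ | ⟨b, hb, hb'⟩
      · exact Finset.disjoint_left.1 hAB ha (by rwa [← Subtype.ext hb'.symm] at hb)
      · exact hdisj.ne_of_mem a.2 b.2 hb'.symm
      · exact hdisj.ne_of_mem b.2 a.2 hb'
      · exact Finset.disjoint_left.1 hAB' ha (by rwa [← Subtype.ext hb'.symm] at hb)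
    obtain ⟨v, hv, hvA, hvB⟩ := hext A₀ B₀ hdisj0
    have hvS : v ∈ S := by
      by_contra hvS
      have hvR : v ∈ R := by
        have := Set.eq_univ_iff_forall.1 hcover v
        rcases this with h | h
        · exact h
        · exact absurd h hvS
      have hx : (⟨v, hvR⟩ : ↥R) ∉ A ∪ B := by
        intro hmem
        apply hv
        rw [Finset.mem_union] at hmem ⊢
        rcases hmem with h | h
        · exact Or.inl (by rw [hA₀, Finset.mem_union]; exact Or.inl (Finset.mem_image_of_mem _ h))
        · exact Or.inr (by rw [hB₀, Finset.mem_union]; exact Or.inl (Finset.mem_image_of_mem _ h))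
      have hy : ∀ a ∈ A, (G.induce R).Adj ⟨v, hvR⟩ a := fun a ha =>
        hvA a.1 (by rw [hA₀, Finset.mem_union]; exact Or.inl (Finset.mem_image_of_mem _ ha))
      obtain ⟨b, hb, hadj⟩ := hfail ⟨v, hvR⟩ hx hy
      exact hvB b.1 (by rw [hB₀, Finset.mem_union]; exact Or.inl (Finset.mem_image_of_mem _ hb)) hadj
    refine ⟨⟨v, hvS⟩, ?_, fun a ha => hvA a.1 ?_, fun b hb => hvB b.1 ?_⟩
    · intro hmem
      apply hv
      rw [Finset.mem_union] at hmem ⊢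
      rcases hmem with h | h
      · exact Or.inl (by rw [hA₀, Finset.mem_union]; exact Or.inr (Finset.mem_image_of_mem _ h))
      · exact Or.inr (by rw [hB₀, Finset.mem_union]; exact Or.inr (Finset.mem_image_of_mem _ h))
    · rw [hA₀, Finset.mem_union]; exact Or.inr (Finset.mem_image_of_mem _ ha)
    · rw [hB₀, Finset.mem_union]; exact Or.inr (Finset.mem_image_of_mem _ hb)
end

section
/- Let G be a countable triangle-free graph with the triangle-free extension property: for every finite independent set A and every finite set B disjoint from A, there exists a vertex v ∉ A ∪ B adjacent to every vertex of A and to no vertex of B. Then for every vertex u, the set N of non-neighbours of u (excluding u itself) is infinite and the induced subgraph on N again satisfies the triangle-free extension property. -/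
theorem henson_nonneighbours {V : Type*} [Countable V] [DecidableEq V] (G : SimpleGraph V)
    (htf : G.CliqueFree 3)
    (hext : ∀ A B : Finset V, (∀ a ∈ A, ∀ a' ∈ A, ¬ G.Adj a a') → Disjoint A B →
      ∃ v, v ∉ A ∪ B ∧ (∀ a ∈ A, G.Adj v a) ∧ ∀ b ∈ B, ¬ G.Adj v b)
    (u : V) :
    let N : Set V := {v | v ≠ u ∧ ¬ G.Adj u v}
    N.Infinite ∧
      ∀ A B : Finset V, ↑A ⊆ N → ↑B ⊆ N → (∀ a ∈ A, ∀ a' ∈ A, ¬ G.Adj a a') →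
        Disjoint A B →
        ∃ v ∈ N, v ∉ A ∪ B ∧ (∀ a ∈ A, G.Adj v a) ∧ ∀ b ∈ B, ¬ G.Adj v b := by
  intro N
  constructor
  · by_contra hcon
    rw [Set.not_infinite] at hcon
    have hfin := hcon
    obtain ⟨v, hv, -, hnadj⟩ := hext ∅ (insert u hfin.toFinset)
      (by simp) (by simp)
    have hvu : ¬ G.Adj v u := hnadj u (Finset.mem_insert_self _ _)
    have hvne : v ≠ u := by
      intro h; exact hv (by simp [h])
    have : v ∈ N := ⟨hvne, fun h => hvu h.symm⟩
    apply hv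
    simp only [Finset.mem_union, Finset.mem_insert, Set.Finite.mem_toFinset]
    tauto
  · intro A B hA hB hind hdisj
    have huA : u ∉ A := fun h => (hA h).1 rfl
    obtain ⟨v, hv, hadj, hnadj⟩ := hext A (insert u B) hind
      (by
        rw [Finset.disjoint_insert_right]
        exact ⟨huA, hdisj⟩)
    have hvu : ¬ G.Adj v u := hnadj u (Finset.mem_insert_self _ _)
    have hvne : v ≠ u := by
      intro h
      exact hv (by simp [h])
    refine ⟨v, ⟨hvne, fun h => hvu h.symm⟩, ?_, hadj, fun b hb => hnadj b (Finset.mem_insert_of_mem hb)⟩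
    intro h
    apply hv
    simp only [Finset.mem_union, Finset.mem_insert] at h ⊢
    tauto
end

section
/- Let G be a subgroup of the symmetric group of a countable set U, and for S ⊆ U let ρ(S) be the set of finite A ⊆ U with g[A] ⊆ S for some g ∈ G. Fix n ∈ ℕ. Then S ⊆ U is n-age indivisible if and only if for every A ∈ ρ(S) there exists a finite B ∈ ρ(S) such that for every partition of B into n parts B₀,…,B_{n−1} there is an index i with A ∈ ρ(B_i). -/
/-- The `G`-age of a set `S`: finite subsets of `U` that can be mapped into `S`
by some element of `G`. -/
def Gage {U : Type*} (G : Subgroup (Equiv.Perm U)) (S : Set U) : Set (Finset U) :=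
  {A | ∃ g ∈ G, ∀ a ∈ A, g a ∈ S}

/-- `P` is a partition of `S` into `n` parts. -/
def IsPartitionInto {U : Type*} (S : Set U) (n : ℕ) (P : Fin n → Set U) : Prop :=
  (∀ i j, i ≠ j → Disjoint (P i) (P j)) ∧ (⋃ i, P i) = S

/-- `S` is `n`-age indivisible for `G`. -/
def NAgeIndivisible {U : Type*} (G : Subgroup (Equiv.Perm U)) (S : Set U) (n : ℕ) : Prop :=
  ∀ P : Fin n → Set U, IsPartitionInto S n P → ∃ i, Gage G (P i) = Gage G S

/-- Any finite subset of `S` is in the age (take `g = 1`). -/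
lemma mem_gage_of_subset {U : Type*} (G : Subgroup (Equiv.Perm U)) {S : Set U} {A : Finset U}
    (h : ↑A ⊆ S) : A ∈ Gage G S :=
  ⟨1, one_mem G, fun a ha => by simpa using h ha⟩

theorem nAgeIndivisible_iff_finitary {U : Type*} [Countable U] [Infinite U] [DecidableEq U]
    (G : Subgroup (Equiv.Perm U)) (S : Set U) (n : ℕ) :
    NAgeIndivisible G S n ↔
      ∀ A ∈ Gage G S, ∃ B ∈ Gage G S,
        ∀ Q : Fin n → Finset U, (∀ i j, i ≠ j → Disjoint (Q i) (Q j)) →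
          Finset.univ.biUnion Q = B → ∃ i, A ∈ Gage G ↑(Q i) := by
  classical
  constructor
  · -- forward direction: compactness via an ultrafilter
    intro hind A hA
    rcases Nat.eq_zero_or_pos n with hn | hn
    · -- n = 0 : S must be nonempty
      subst hn
      have hS : S ≠ ∅ := by
        intro hSe
        obtain ⟨i, _⟩ := hind (fun i => i.elim0) ⟨fun i => i.elim0, by simp [hSe]⟩
        exact i.elim0
      obtain ⟨s, hs⟩ := Set.nonempty_iff_ne_empty.2 hS
      refine ⟨{s}, mem_gage_of_subset G (by simpa using hs), ?_⟩
      intro Q _ hQ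
      exfalso
      have : (Finset.univ : Finset (Fin 0)) = ∅ := rfl
      rw [this] at hQ
      simp at hQ
    · haveI : NeZero n := ⟨hn.ne'⟩
      by_contra hcon
      push_neg at hcon
      -- choose a "bad" partition for each finite subset of S
      have hQex : ∀ F : Finset U, ∃ Q : Fin n → Finset U, ↑F ⊆ S →
          Finset.univ.biUnion Q = F ∧ ∀ i, A ∉ Gage G ↑(Q i) := by
        intro F
        by_cases hF : ↑F ⊆ S
        · obtain ⟨Q, _, h2, h3⟩ := hcon F (mem_gage_of_subset G hF)
          exact ⟨Q, fun _ => ⟨h2, h3⟩⟩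
        · exact ⟨fun _ => ∅, fun h => absurd h hF⟩
      choose Q hQ using hQex
      -- restriction to S
      set D : Finset U → Finset U := fun F => F.filter (· ∈ S) with hD
      have hDsub : ∀ F, ↑(D F) ⊆ S := by
        intro F x hx
        simp only [hD, Finset.coe_filter, Set.mem_setOf_eq] at hx
        exact hx.2
      -- the coloring at stage F
      set col : Finset U → U → Fin n := fun F x =>
        if h : ∃ i, x ∈ Q (D F) i then h.choose else 0 with hcol
      have hcolmem : ∀ F x, x ∈ D F → x ∈ Q (D F) (col F x) := by
        intro F x hx
        have hex : ∃ i, x ∈ Q (D F) i := by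
          have := (hQ (D F) (hDsub F)).1
          rw [← this] at hx
          simpa using hx
        simp only [hcol, dif_pos hex]
        exact hex.choose_spec
      -- the ultrafilter
      haveI : Filter.NeBot (Filter.atTop : Filter (Finset U)) := Filter.atTop_neBot
      set 𝒰 := Ultrafilter.of (Filter.atTop : Filter (Finset U)) with h𝒰
      -- limit coloring
      have hc : ∀ x : U, ∃ i : Fin n, {F | col F x = i} ∈ 𝒰 := by
        intro x
        have huniv : (⋃ i ∈ (Set.univ : Set (Fin n)), {F | col F x = i}) ∈ 𝒰 := by
          have : (⋃ i ∈ (Set.univ : Set (Fin n)), {F : Finset U | col F x = i}) = Set.univ := by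
            ext F; simp
          rw [this]; exact Filter.univ_mem
        obtain ⟨i, _, hi⟩ := (Ultrafilter.finite_biUnion_mem_iff Set.finite_univ).1 huniv
        exact ⟨i, hi⟩
      choose c hc using hc
      -- the partition of S
      set P : Fin n → Set U := fun i => {x | x ∈ S ∧ c x = i} with hP
      have hpart : IsPartitionInto S n P := by
        constructor
        · intro i j hij
          rw [Set.disjoint_left]
          rintro x ⟨_, hxi⟩ ⟨_, hxj⟩
          exact hij (hxi ▸ hxj ▸ rfl)
        · ext x
          simp only [Set.mem_iUnion, hP, Set.mem_setOf_eq]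
          exact ⟨fun ⟨i, h, _⟩ => h, fun h => ⟨c x, h, rfl⟩⟩
      obtain ⟨i, hi⟩ := hind P hpart
      obtain ⟨g, hgG, hg⟩ : A ∈ Gage G (P i) := hi ▸ hA
      -- eventually, F contains g '' A and the stage colorings agree with c there
      have hev1 : ∀ᶠ F in (𝒰 : Filter (Finset U)), A.image g ≤ F :=
        (Ultrafilter.of_le _) (Filter.eventually_ge_atTop (A.image g))
      have hev2 : ∀ᶠ F in (𝒰 : Filter (Finset U)), ∀ a ∈ A, col F (g a) = c (g a) := by
        rw [Filter.eventually_all_finset]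
        intro a _
        exact hc (g a)
      obtain ⟨F, hF1, hF2⟩ := (hev1.and hev2).exists
      -- derive the contradiction
      have hbad := (hQ (D F) (hDsub F)).2 i
      apply hbad
      refine ⟨g, hgG, fun a ha => ?_⟩
      have hgaP : g a ∈ P i := hg a ha
      have hgaS : g a ∈ S := hgaP.1
      have hgaF : g a ∈ F := hF1 (Finset.mem_image_of_mem g ha)
      have hgaD : g a ∈ D F := by simp [hD, hgaF, hgaS]
      have := hcolmem F (g a) hgaD
      rwa [hF2 a ha, hgaP.2] at this
  · -- backward direction
    intro hfin P hP
    by_contra hcon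
    push_neg at hcon
    have hPsub : ∀ i, P i ⊆ S := fun i => hP.2 ▸ Set.subset_iUnion P i
    have hsub : ∀ i, Gage G (P i) ⊆ Gage G S := by
      rintro i B ⟨g, hgG, hg⟩
      exact ⟨g, hgG, fun a ha => hPsub i (hg a ha)⟩
    have hAi : ∀ i, ∃ Ai, Ai ∈ Gage G S ∧ Ai ∉ Gage G (P i) := by
      intro i
      by_contra h'
      push_neg at h'
      exact hcon i ((hsub i).antisymm fun B hB => h' B hB)
    choose Ai hAiS hAin using hAi
    choose gi hgiG hgi using fun i => hAiS i
    set A : Finset U := Finset.univ.biUnion (fun i => (Ai i).image (gi i)) with hAdef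
    have hAS : ↑A ⊆ S := by
      intro x hx
      simp only [hAdef, Finset.coe_biUnion, Finset.mem_coe, Finset.mem_image,
        Set.mem_iUnion, Finset.mem_coe, Finset.mem_univ, Set.iUnion_true] at hx
      obtain ⟨i, a, ha, rfl⟩ := hx
      exact hgi i a ha
    obtain ⟨B, ⟨g, hgG, hg⟩, hBprop⟩ := hfin A (mem_gage_of_subset G hAS)
    set Q : Fin n → Finset U := fun i => B.filter (fun b => g b ∈ P i) with hQdef
    have hdisj : ∀ i j, i ≠ j → Disjoint (Q i) (Q j) := by
      intro i j hij
      rw [Finset.disjoint_left]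
      intro b hbi hbj
      simp only [hQdef, Finset.mem_filter] at hbi hbj
      exact Set.disjoint_left.1 (hP.1 i j hij) hbi.2 hbj.2
    have hbiU : Finset.univ.biUnion Q = B := by
      ext b
      simp only [Finset.mem_biUnion, Finset.mem_univ, true_and, hQdef, Finset.mem_filter]
      constructor
      · rintro ⟨i, hb, _⟩; exact hb
      · intro hb
        have : g b ∈ ⋃ i, P i := hP.2.symm ▸ hg b hb
        obtain ⟨i, hi⟩ := Set.mem_iUnion.1 this
        exact ⟨i, hb, hi⟩
    obtain ⟨i, h, hhG, hh⟩ := hBprop Q hdisj hbiU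
    apply hAin i
    refine ⟨g * h * gi i, mul_mem (mul_mem hgG hhG) (hgiG i), fun a ha => ?_⟩
    have h1 : gi i a ∈ A := by
      simp only [hAdef, Finset.mem_biUnion, Finset.mem_univ, true_and]
      exact ⟨i, Finset.mem_image_of_mem _ ha⟩
    have h2 : h (gi i a) ∈ Q i := by simpa using hh _ h1
    simp only [hQdef, Finset.mem_filter] at h2
    simpa [Equiv.Perm.mul_apply] using h2.2
end

section
/- Let G be a subgroup of the symmetric group of a countable set U and define ρ as the G-age function on subsets of U. If S, T ⊆ U satisfy ρ(S) = ρ(T), then for every n ∈ ℕ, S is n-age indivisible if and only if T is n-age indivisible. -/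
lemma gage_mono {U : Type*} (G : Subgroup (Equiv.Perm U)) {A B : Set U} (h : A ⊆ B) :
    Gage G A ⊆ Gage G B := by
  rintro X ⟨g, hg, hgA⟩
  exact ⟨g, hg, fun a ha => h (hgA a ha)⟩

lemma gage_nonempty {U : Type*} (G : Subgroup (Equiv.Perm U)) {S T : Set U}
    (h : Gage G S = Gage G T) : S.Nonempty → T.Nonempty := by
  rintro ⟨s, hs⟩
  have h1 : ({s} : Finset U) ∈ Gage G S := ⟨1, one_mem G, by simp [hs]⟩
  rw [h] at h1
  obtain ⟨g, _, hg⟩ := h1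
  exact ⟨g s, hg s (by simp)⟩

lemma nAgeIndivisible_key {U : Type*} (G : Subgroup (Equiv.Perm U)) {S T : Set U}
    (hST : Gage G S = Gage G T) {n : ℕ} (hn : 0 < n)
    (hS : NAgeIndivisible G S n) : NAgeIndivisible G T n := by
  classical
  intro Q hQ
  -- for each finite set, its part inside S embeds into T
  have hA : ∀ A : Finset U, ∃ g ∈ G, ∀ a ∈ A, a ∈ S → g a ∈ T := by
    intro A
    have h1 : (A.filter (· ∈ S)) ∈ Gage G S :=
      ⟨1, one_mem G, by intro a ha; simpa using (Finset.mem_filter.mp ha).2⟩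
    rw [hST] at h1
    obtain ⟨g, hgG, hgT⟩ := h1
    exact ⟨g, hgG, fun a ha haS => hgT a (Finset.mem_filter.mpr ⟨ha, haS⟩)⟩
  choose g hgG hgT using hA
  have hf0 : ∀ A : Finset U, ∀ a, a ∈ A → a ∈ S → ∃ i, g A a ∈ Q i := by
    intro A a ha haS
    have h2 := hgT A a ha haS
    rw [← hQ.2] at h2
    exact Set.mem_iUnion.mp h2
  -- coloring associated to each finite set
  let f : Finset U → U → Fin n := fun A a =>
    if h' : a ∈ A ∧ a ∈ S then (hf0 A a h'.1 h'.2).choose else ⟨0, hn⟩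
  have hf : ∀ A : Finset U, ∀ a, a ∈ A → a ∈ S → g A a ∈ Q (f A a) := by
    intro A a ha haS
    simp only [f, dif_pos (And.intro ha haS)]
    exact (hf0 A a ha haS).choose_spec
  -- ultrafilter extending atTop on finite subsets
  let u : Ultrafilter (Finset U) := Ultrafilter.of Filter.atTop
  have hu : (u : Filter (Finset U)) ≤ Filter.atTop := Ultrafilter.of_le _
  -- limit coloring
  have hc : ∀ a : U, ∃ i : Fin n, {A : Finset U | f A a = i} ∈ u := by
    intro a
    have huniv : (⋃ i ∈ (Finset.univ : Finset (Fin n)), {A : Finset U | f A a = i}) ∈ u := by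
      have : (⋃ i ∈ (Finset.univ : Finset (Fin n)), {A : Finset U | f A a = i}) = Set.univ := by
        ext A; simp
      rw [this]; exact Filter.univ_mem
    obtain ⟨i, _, hi⟩ := (Ultrafilter.finite_biUnion_mem_iff (Finset.univ : Finset (Fin n)).finite_toSet).mp huniv
    exact ⟨i, hi⟩
  choose c hcu using hc
  -- induced partition of S
  let P : Fin n → Set U := fun i => {x | x ∈ S ∧ c x = i}
  have hP : IsPartitionInto S n P := by
    constructor
    · intro i j hij
      rw [Set.disjoint_left]
      rintro x ⟨_, hi⟩ ⟨_, hj⟩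
      exact hij (hi ▸ hj ▸ rfl)
    · ext x
      simp only [P, Set.mem_iUnion, Set.mem_setOf_eq]
      exact ⟨fun ⟨i, hx, _⟩ => hx, fun hx => ⟨c x, hx, rfl⟩⟩
  obtain ⟨i, hPi⟩ := hS P hP
  refine ⟨i, le_antisymm ?_ ?_⟩
  · exact gage_mono G (by rw [← hQ.2]; exact Set.subset_iUnion Q i)
  · -- Gage T ⊆ Gage (Q i), via Gage T = Gage S = Gage (P i) ⊆ Gage (Q i)
    rw [← hST, ← hPi]
    rintro B ⟨h, hhG, hhB⟩
    set A : Finset U := B.image h with hAdef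
    have hE1 : {A' : Finset U | A ⊆ A'} ∈ u := hu (Filter.mem_atTop A)
    have hE2 : (⋂ a ∈ A, {A' : Finset U | f A' a = c a}) ∈ u :=
      Filter.biInter_finset_mem A |>.mpr (fun a _ => hcu a)
    obtain ⟨A', hA'1, hA'2⟩ := Ultrafilter.nonempty_of_mem (Filter.inter_mem hE1 hE2)
    refine ⟨g A' * h, mul_mem (hgG A') hhG, fun b hb => ?_⟩
    have hbP : h b ∈ P i := hhB b hb
    have hbA : h b ∈ A := Finset.mem_image_of_mem h hb
    have hbA' : h b ∈ A' := hA'1 hbA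
    have hfc : f A' (h b) = c (h b) := by
      have := Set.mem_iInter₂.mp hA'2 (h b) hbA
      exact this
    have hbS : h b ∈ S := hbP.1
    have := hf A' (h b) hbA' hbS
    rw [hfc, hbP.2] at this
    simpa [Equiv.Perm.mul_apply] using this

theorem nAgeIndivisible_age_invariant {U : Type*} [Countable U] [Infinite U]
    (G : Subgroup (Equiv.Perm U)) (S T : Set U) (h : Gage G S = Gage G T) (n : ℕ) :
    NAgeIndivisible G S n ↔ NAgeIndivisible G T n := by
  rcases Nat.eq_zero_or_pos n with rfl | hn
  · -- n = 0 : indivisibility is equivalent to nonemptiness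
    have key : ∀ S' : Set U, NAgeIndivisible G S' 0 ↔ S'.Nonempty := by
      intro S'
      constructor
      · intro hind
        by_contra hne
        rw [Set.not_nonempty_iff_eq_empty] at hne
        obtain ⟨i, _⟩ := hind (fun i => ∅) ⟨fun i => i.elim0, by simp [hne]⟩
        exact i.elim0
      · rintro ⟨s, hs⟩ P hP
        exfalso
        have : (⋃ i : Fin 0, P i) = ∅ := by simp
        rw [hP.2] at this
        rw [this] at hs
        exact hs
    rw [key S, key T]
    exact ⟨gage_nonempty G h, gage_nonempty G h.symm⟩
  · exact ⟨nAgeIndivisible_key G h hn, nAgeIndivisible_key G h.symm hn⟩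
end

section
/- Let U be an infinite set, (𝒮, ⊑) a partial order with maximum element u, (ℛ, ⊆) a linear order, σ a map from 𝒮 to infinite subsets of U with σ(u) = U, and ρ : 𝒮 → ℛ, such that: X ⊑ Y implies σ(X) ⊆ σ(Y) and ρ(X) ⊆ ρ(Y); and for every X ∈ 𝒮 and r ∈ ℛ with r ⊆ ρ(X) there exists R ⊑ X with ρ(R) = r. Call Y a refinement of X if Y ⊑ X and ρ(Y) = ρ(X), and an r-restriction of X if Y ⊑ X and ρ(Y) = r. Call a set S ⊆ U large if there exists 𝒲 ⊆ 𝒮 containing u such that for every X ∈ 𝒲: σ(X) ∩ S is infinite, and for every r ⊆ ρ(X) there exists a refinement Y of X such that every refinement Z of Y admits an r-restriction R of Z with R ∈ 𝒲. Then for every partition of U into two parts S and P, at least one of S, P is large. -/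
/-- `S ⊆ U` is large with respect to the data `(σ, ρ, u)`: there is a witness set
`𝒲` of sorts containing the maximum `u` such that for every `X ∈ 𝒲`, `σ X ∩ S` is
infinite and for every rank `r ≤ ρ X` there is a refinement `Y` of `X` such that
every refinement `Z` of `Y` has an `r`-restriction belonging to `𝒲`. -/
def IsLarge {U 𝒮 ℛ : Type*} [PartialOrder 𝒮] [LinearOrder ℛ]
    (σ : 𝒮 → Set U) (ρ : 𝒮 → ℛ) (u : 𝒮) (S : Set U) : Prop :=
  ∃ 𝒲 : Set 𝒮, u ∈ 𝒲 ∧ ∀ X ∈ 𝒲, (σ X ∩ S).Infinite ∧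
    ∀ r : ℛ, r ≤ ρ X →
      ∃ Y, (Y ≤ X ∧ ρ Y = ρ X) ∧
        ∀ Z, Z ≤ Y → ρ Z = ρ Y →
          ∃ R, (R ≤ Z ∧ ρ R = r) ∧ R ∈ 𝒲

/-- The inductive labelling of sorts: `X` is labelled if `σ X ∩ P` is finite, or if
there is a rank `r ≤ ρ X` such that every refinement `Y` of `X` has a refinement
(given by a skolem function `f`) all of whose `r`-restrictions are labelled. -/
inductive Lab {U 𝒮 ℛ : Type*} [PartialOrder 𝒮] [LinearOrder ℛ]
    (σ : 𝒮 → Set U) (ρ : 𝒮 → ℛ) (P : Set U) : 𝒮 → Prop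
  | base (X : 𝒮) (h : (σ X ∩ P).Finite) : Lab σ ρ P X
  | step (X : 𝒮) (r : ℛ) (f : 𝒮 → 𝒮) (hr : r ≤ ρ X)
      (hf : ∀ Y, Y ≤ X → ρ Y = ρ X → f Y ≤ Y ∧ ρ (f Y) = ρ Y)
      (h : ∀ Y, Y ≤ X → ρ Y = ρ X → ∀ R, R ≤ f Y → ρ R = r → Lab σ ρ P R) :
      Lab σ ρ P X

theorem lab_good {U 𝒮 ℛ : Type*} [Infinite U] [PartialOrder 𝒮] [LinearOrder ℛ]
    (σ : 𝒮 → Set U) (ρ : 𝒮 → ℛ)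
    (hσinf : ∀ X, (σ X).Infinite)
    (hσmono : ∀ X Y : 𝒮, X ≤ Y → σ X ⊆ σ Y)
    (hrestrict : ∀ X : 𝒮, ∀ r : ℛ, r ≤ ρ X → ∃ R, R ≤ X ∧ ρ R = r)
    (S P : Set U) (hcover : S ∪ P = Set.univ) :
    ∀ X : 𝒮, Lab σ ρ P X → (σ X ∩ S).Infinite ∧
      ∀ r : ℛ, r ≤ ρ X →
        ∃ Y, (Y ≤ X ∧ ρ Y = ρ X) ∧
          ∀ Z, Z ≤ Y → ρ Z = ρ Y →
            ∃ R, (R ≤ Z ∧ ρ R = r) ∧ Lab σ ρ P R := by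
  intro X h
  induction h with
  | base X hfin =>
    constructor
    · have hsub : σ X ⊆ (σ X ∩ S) ∪ (σ X ∩ P) := by
        intro x hx
        have : x ∈ S ∪ P := hcover ▸ Set.mem_univ x
        rcases this with h | h
        · exact Or.inl ⟨hx, h⟩
        · exact Or.inr ⟨hx, h⟩
      by_contra hS
      rw [Set.not_infinite] at hS
      exact (hσinf X) (Set.Finite.subset (hS.union hfin) hsub)
    · intro r hr
      refine ⟨X, ⟨le_refl X, rfl⟩, ?_⟩
      intro Z hZ hρZ
      obtain ⟨R, hRZ, hρR⟩ := hrestrict Z r (hρZ ▸ hr)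
      exact ⟨R, ⟨hRZ, hρR⟩, Lab.base R (hfin.subset (Set.inter_subset_inter_left _
        (hσmono R X (hRZ.trans hZ))))⟩
  | step X r₀ f hr₀ hf h ih =>
    constructor
    · -- take the r₀-restriction of f X; it is labelled and its S-part is infinite
      obtain ⟨hfX, hρfX⟩ := hf X (le_refl X) rfl
      obtain ⟨R, hRfX, hρR⟩ := hrestrict (f X) r₀ (hρfX ▸ hr₀)
      have hGood := ih X (le_refl X) rfl R hRfX hρR
      exact hGood.1.mono (Set.inter_subset_inter_left _
        (hσmono R X (hRfX.trans hfX)))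
    · intro r hr
      refine ⟨X, ⟨le_refl X, rfl⟩, ?_⟩
      intro Z hZX hρZ
      obtain ⟨hfZ, hρfZ⟩ := hf Z hZX hρZ
      rcases le_total r r₀ with hle | hle
      · -- r ≤ r₀ : go through an r₀-restriction R' of f Z, then use IH at R'
        obtain ⟨R', hR'fZ, hρR'⟩ := hrestrict (f Z) r₀ (by rw [hρfZ, hρZ]; exact hr₀)
        have hGood := ih Z hZX hρZ R' hR'fZ hρR'
        obtain ⟨Y₁, ⟨hY₁R', hρY₁⟩, hY₁⟩ := hGood.2 r (hρR' ▸ hle)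
        obtain ⟨R, ⟨hRY₁, hρR⟩, hRLab⟩ := hY₁ Y₁ (le_refl Y₁) rfl
        exact ⟨R, ⟨hRY₁.trans (hY₁R'.trans (hR'fZ.trans hfZ)), hρR⟩, hRLab⟩
      · -- r₀ ≤ r : take an r-restriction R of f Z; it is labelled via rank r₀
        obtain ⟨R, hRfZ, hρR⟩ := hrestrict (f Z) r (by rw [hρfZ, hρZ]; exact hr)
        refine ⟨R, ⟨hRfZ.trans hfZ, hρR⟩, ?_⟩
        refine Lab.step R r₀ id (hρR ▸ hle) (fun Y₁ _ hρY₁ => ⟨le_refl Y₁, rfl⟩) ?_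
        intro Y₁ hY₁R hρY₁ R₁ hR₁Y₁ hρR₁
        exact h Z hZX hρZ R₁ (hR₁Y₁.trans (hY₁R.trans hRfZ)) hρR₁

theorem large_partition {U 𝒮 ℛ : Type*} [Infinite U] [PartialOrder 𝒮] [LinearOrder ℛ]
    (σ : 𝒮 → Set U) (ρ : 𝒮 → ℛ) (u : 𝒮)
    (hmax : ∀ X, X ≤ u) (hσu : σ u = Set.univ)
    (hσinf : ∀ X, (σ X).Infinite)
    (hσmono : ∀ X Y : 𝒮, X ≤ Y → σ X ⊆ σ Y)
    (hρmono : ∀ X Y : 𝒮, X ≤ Y → ρ X ≤ ρ Y)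
    (hrestrict : ∀ X : 𝒮, ∀ r : ℛ, r ≤ ρ X → ∃ R, R ≤ X ∧ ρ R = r)
    (S P : Set U) (hdisj : Disjoint S P) (hcover : S ∪ P = Set.univ) :
    IsLarge σ ρ u S ∨ IsLarge σ ρ u P := by
  classical
  by_cases hu : Lab σ ρ P u
  · left
    exact ⟨{X | Lab σ ρ P X}, hu,
      fun X hX => lab_good σ ρ hσinf hσmono hrestrict S P hcover X hX⟩
  · right
    refine ⟨{X | ¬ Lab σ ρ P X}, hu, ?_⟩
    intro X hX
    constructor
    · by_contra hP
      rw [Set.not_infinite] at hP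
      exact hX (Lab.base X hP)
    · intro r hr
      by_contra hcon
      push_neg at hcon
      -- hcon: every refinement Y of X admits a refinement Z all of whose
      -- r-restrictions are labelled (after unpacking negations)
      have key : ∀ Y, Y ≤ X → ρ Y = ρ X →
          ∃ Z, (Z ≤ Y ∧ ρ Z = ρ Y) ∧ ∀ R, R ≤ Z → ρ R = r → Lab σ ρ P R := by
        intro Y hYX hρY
        have := hcon Y ⟨hYX, hρY⟩
        obtain ⟨Z, hZY, hρZ, hZ⟩ := this
        refine ⟨Z, ⟨hZY, hρZ⟩, ?_⟩
        intro R hRZ hρR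
        by_contra hRL
        exact (hZ R ⟨hRZ, hρR⟩) hRL
      choose g hg1 hg2 using key
      exact hX (Lab.step X r (fun Y => if h : Y ≤ X ∧ ρ Y = ρ X then g Y h.1 h.2 else Y)
        hr
        (fun Y hY hρY => by simp only [dif_pos (And.intro hY hρY)]; exact hg1 Y hY hρY)
        (fun Y hY hρY R hR hρR => by
          simp only [dif_pos (And.intro hY hρY)] at hR
          exact hg2 Y hY hρY R hR hρR))
end

section
/- In the setting of the abstract partition framework (𝕆 property): let λ_S be the ordinal labelling of sorts relative to S ⊆ U. If a sort X is labelled by λ_S, then every refinement of X is labelled, and σ(X) ∩ S is infinite. -/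
/-- `W` is closed under the rules defining the labelling `λ_S`: a sort `X` is
labelled if `σ X \ S` is finite, or if there is a rank `r ≤ ρ X` such that for
every refinement `Y` of `X` there is a refinement `Z` of `Y` all of whose
`r`-restrictions are already labelled. -/
def LabelClosed {U 𝒮 ℛ : Type*} [PartialOrder 𝒮] [LinearOrder ℛ]
    (σ : 𝒮 → Set U) (ρ : 𝒮 → ℛ) (S : Set U) (W : Set 𝒮) : Prop :=
  (∀ X, (σ X \ S).Finite → X ∈ W) ∧
  (∀ X, (∃ r : ℛ, r ≤ ρ X ∧ ∀ Y, Y ≤ X → ρ Y = ρ X →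
      ∃ Z, Z ≤ Y ∧ ρ Z = ρ Y ∧ ∀ R, R ≤ Z → ρ R = r → R ∈ W) → X ∈ W)

/-- The set of sorts labelled by `λ_S`: the least set closed under the
recursive labelling rules. -/
def Labelled {U 𝒮 ℛ : Type*} [PartialOrder 𝒮] [LinearOrder ℛ]
    (σ : 𝒮 → Set U) (ρ : 𝒮 → ℛ) (S : Set U) : Set 𝒮 :=
  ⋂₀ {W | LabelClosed σ ρ S W}

theorem labelled_refinement_and_infinite {U 𝒮 ℛ : Type*} [Infinite U]
    [PartialOrder 𝒮] [LinearOrder ℛ]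
    (σ : 𝒮 → Set U) (ρ : 𝒮 → ℛ) (u : 𝒮)
    (hmax : ∀ X, X ≤ u) (hσu : σ u = Set.univ)
    (hσinf : ∀ X, (σ X).Infinite)
    (hσmono : ∀ X Y : 𝒮, X ≤ Y → σ X ⊆ σ Y)
    (hρmono : ∀ X Y : 𝒮, X ≤ Y → ρ X ≤ ρ Y)
    (hrestrict : ∀ X : 𝒮, ∀ r : ℛ, r ≤ ρ X → ∃ R, R ≤ X ∧ ρ R = r)
    (S : Set U) (X : 𝒮) (hX : X ∈ Labelled σ ρ S) :
    (∀ Y, Y ≤ X → ρ Y = ρ X → Y ∈ Labelled σ ρ S) ∧ (σ X ∩ S).Infinite := by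
  set L := Labelled σ ρ S with hL
  set W : Set 𝒮 := {X | (∀ Y, Y ≤ X → ρ Y = ρ X → Y ∈ L) ∧ (σ X ∩ S).Infinite} with hWdef
  have hLclosed : LabelClosed σ ρ S L := by
    constructor
    · intro X hfin T hT; exact hT.1 X hfin
    · intro X h T hT
      refine hT.2 X ?_
      obtain ⟨r, hr, hstep⟩ := h
      exact ⟨r, hr, fun Y hY hρ => by
        obtain ⟨Z, hZ, hρZ, hR⟩ := hstep Y hY hρ
        exact ⟨Z, hZ, hρZ, fun R hRZ hρR => hR R hRZ hρR T hT⟩⟩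
  have hWL : ∀ R, R ∈ W → R ∈ L := fun R hR => hR.1 R le_rfl rfl
  have hWclosed : LabelClosed σ ρ S W := by
    constructor
    · intro X hfin
      refine ⟨fun Y hY hρ => hLclosed.1 Y (hfin.subset fun x hx => ⟨hσmono Y X hY hx.1, hx.2⟩), ?_⟩
      have h1 : (σ X \ (σ X \ S)).Infinite := (hσinf X).diff hfin
      have h2 : σ X \ (σ X \ S) = σ X ∩ S := by ext x; simp (config := {contextual := true})
      rwa [h2] at h1
    · rintro X ⟨r, hr, hstep⟩
      constructor
      · intro Y hYX hρY
        apply hLclosed.2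
        refine ⟨r, hρY ▸ hr, fun Y' hY' hρ' => ?_⟩
        obtain ⟨Z, hZ, hρZ, hRW⟩ := hstep Y' (hY'.trans hYX) (hρ'.trans hρY)
        exact ⟨Z, hZ, hρZ, fun R hR hρR => hWL R (hRW R hR hρR)⟩
      · obtain ⟨Z, hZX, hρZ, hRW⟩ := hstep X le_rfl rfl
        obtain ⟨R, hRZ, hρR⟩ := hrestrict Z r (by rw [hρZ]; exact hr)
        exact ((hRW R hRZ hρR).2).mono
          (Set.inter_subset_inter_left S (hσmono R X (hRZ.trans hZX)))
  have hXW : X ∈ W := hX W hWclosed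
  exact ⟨hXW.1, hXW.2⟩
end

section
/- In the abstract partition framework with labelling λ_S: if a sort X is labelled and there exists a rank r₀ witnessing the labelling condition Φ(X, r₀) (for every refinement Y of X there is a refinement Z of Y all of whose r₀-restrictions are labelled), then Φ(X, r) holds for every rank r with r₀ ⊆ r ⊆ ρ(X). -/
/-- `Φ(X, r)`: `r ≤ ρ X` and for every refinement `Y` of `X` there is a
refinement `Z` of `Y` all of whose `r`-restrictions are labelled. -/
def Phi {U 𝒮 ℛ : Type*} [PartialOrder 𝒮] [LinearOrder ℛ]
    (σ : 𝒮 → Set U) (ρ : 𝒮 → ℛ) (S : Set U) (X : 𝒮) (r : ℛ) : Prop :=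
  r ≤ ρ X ∧ ∀ Y, Y ≤ X → ρ Y = ρ X →
    ∃ Z, Z ≤ Y ∧ ρ Z = ρ Y ∧ ∀ R, R ≤ Z → ρ R = r → R ∈ Labelled σ ρ S

theorem phi_up {U 𝒮 ℛ : Type*} [Infinite U] [PartialOrder 𝒮] [LinearOrder ℛ]
    (σ : 𝒮 → Set U) (ρ : 𝒮 → ℛ) (u : 𝒮)
    (hmax : ∀ X, X ≤ u) (hσu : σ u = Set.univ)
    (hσinf : ∀ X, (σ X).Infinite)
    (hσmono : ∀ X Y : 𝒮, X ≤ Y → σ X ⊆ σ Y)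
    (hρmono : ∀ X Y : 𝒮, X ≤ Y → ρ X ≤ ρ Y)
    (hrestrict : ∀ X : 𝒮, ∀ r : ℛ, r ≤ ρ X → ∃ R, R ≤ X ∧ ρ R = r)
    (S : Set U) (X : 𝒮) (r₀ r : ℛ)
    (hX : X ∈ Labelled σ ρ S) (hΦ : Phi σ ρ S X r₀)
    (h₁ : r₀ ≤ r) (h₂ : r ≤ ρ X) :
    Phi σ ρ S X r := by
  obtain ⟨hr₀, hΦ'⟩ := hΦ
  refine ⟨h₂, fun Y hYX hρY => ?_⟩
  obtain ⟨Z, hZY, hρZ, hZ⟩ := hΦ' Y hYX hρY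
  refine ⟨Z, hZY, hρZ, fun R hRZ hρR => ?_⟩
  intro W hW
  apply hW.2 R
  refine ⟨r₀, hρR ▸ h₁, fun Y' hY'R hρY' => ?_⟩
  refine ⟨Y', le_refl _, rfl, fun R' hR'Y' hρR' => ?_⟩
  exact hZ R' (le_trans hR'Y' (le_trans hY'R hRZ)) hρR' W hW
end

section
/- Let S and R be countable relational structures in the same relational language such that every finite structure embeddable in S is embeddable in R. If the automorphism group of R is oligomorphic (for every n, finitely many orbits on n-tuples), then S embeds into R. -/
open FirstOrder FirstOrder.Language

section CameronAux

variable (L : Language) [L.IsRelational] {M N : Type} [L.Structure M] [L.Structure N]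

/-- `x` is a partial embedding of the first `n` elements of the enumeration `e`. -/
def IsPE (e : ℕ → M) (n : ℕ) (x : Fin n → N) : Prop :=
  Function.Injective x ∧
  ∀ {k : ℕ} (r : L.Relations k) (v : Fin k → Fin n),
    Structure.RelMap r (fun j => x (v j)) ↔ Structure.RelMap r (fun j => e (v j))

lemma IsPE.map {e : ℕ → M} {n : ℕ} {x : Fin n → N} (hx : IsPE L e n x) (g : N ≃[L] N) :
    IsPE L e n (fun i => g (x i)) := by
  refine ⟨g.injective.comp hx.1, fun r v => ?_⟩
  have := g.map_rel' r (fun j => x (v j))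
  exact this.trans (hx.2 r v)

lemma IsPE.res {e : ℕ → M} {m n : ℕ} (h : m ≤ n) {x : Fin n → N} (hx : IsPE L e n x) :
    IsPE L e m (fun i => x (Fin.castLE h i)) := by
  refine ⟨hx.1.comp (Fin.castLE_injective h), fun r v => ?_⟩
  simpa using hx.2 r (fun j => Fin.castLE h (v j))

/-- The induced structure on `Fin n`. -/
def finStr (e : ℕ → M) (n : ℕ) : L.Structure (Fin n) where
  funMap := fun f _ => isEmptyElim f
  RelMap := fun r v => Structure.RelMap r (fun j => e (v j))

lemma exists_pe (e : ℕ → M) (he : Function.Injective e)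
    (hage : ∀ (A : Type) [Fintype A] [L.Structure A],
      Nonempty (A ↪[L] M) → Nonempty (A ↪[L] N)) (n : ℕ) :
    ∃ x : Fin n → N, IsPE L e n x := by
  letI : L.Structure (Fin n) := finStr L e n
  have hMe : Nonempty (Fin n ↪[L] M) := by
    refine ⟨⟨⟨fun i => e i, he.comp Fin.val_injective⟩, fun f => isEmptyElim f,
      fun r v => Iff.rfl⟩⟩
  obtain ⟨φ⟩ := hage (Fin n) hMe
  exact ⟨φ, φ.injective, fun r v => (φ.map_rel' r v).trans Iff.rfl⟩

/-- Subtype of partial embeddings. -/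
abbrev PEsub (e : ℕ → M) (n : ℕ) : Type := {x : Fin n → N // IsPE L e n x}

/-- Equivalence modulo automorphisms of `N`. -/
def peSetoid (e : ℕ → M) (n : ℕ) : Setoid (PEsub L (N := N) e n) where
  r x y := ∃ g : N ≃[L] N, ∀ i, g (x.1 i) = y.1 i
  iseqv := by
    refine ⟨fun x => ⟨FirstOrder.Language.Equiv.refl L N, fun i => rfl⟩, ?_, ?_⟩
    · rintro x y ⟨g, hg⟩
      exact ⟨g.symm, fun i => by rw [← hg i]; exact g.toEquiv.symm_apply_apply _⟩
    · rintro x y z ⟨g, hg⟩ ⟨h, hh⟩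
      exact ⟨h.comp g, fun i => by
        show h (g (x.1 i)) = z.1 i
        rw [hg, hh]⟩

/-- The orbit quotient. -/
abbrev QOrb (e : ℕ → M) (n : ℕ) : Type := Quotient (peSetoid L (N := N) e n)

lemma finite_QOrb (e : ℕ → M) (n : ℕ)
    (holig : ∀ n : ℕ, ∃ T : Set (Fin n → N), T.Finite ∧
      ∀ x : Fin n → N, ∃ y ∈ T, ∃ g : N ≃[L] N, ∀ i, g (y i) = x i) :
    Finite (QOrb L (N := N) e n) := by
  obtain ⟨T, hTfin, hT⟩ := holig n
  haveI : Finite ↥T := hTfin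
  have hsurj : Function.Surjective
      (fun y : {y : Fin n → N // y ∈ T ∧ IsPE L e n y} =>
        (Quotient.mk _ ⟨y.1, y.2.2⟩ : QOrb L (N := N) e n)) := by
    rintro q
    obtain ⟨x, rfl⟩ := Quotient.exists_rep q
    obtain ⟨y, hyT, g, hg⟩ := hT x.1
    have hy : IsPE L e n y := by
      have : IsPE L e n (fun i => g.symm (x.1 i)) := IsPE.map L g.symm (hx := x.2)
      have hyx : y = fun i => g.symm (x.1 i) := by
        funext i; rw [← hg i]; exact (g.toEquiv.symm_apply_apply _).symm
      rwa [hyx]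
    exact ⟨⟨y, hyT, hy⟩, Quotient.sound ⟨g, hg⟩⟩
  have : Finite {y : Fin n → N // y ∈ T ∧ IsPE L e n y} :=
    Finite.of_injective (fun y => (⟨y.1, y.2.1⟩ : ↥T))
      (fun a b h => by simpa [Subtype.ext_iff] using h)
  exact Finite.of_surjective _ hsurj

/-- Restriction on orbits. -/
def resQ (e : ℕ → M) {m n : ℕ} (h : m ≤ n) :
    QOrb L (N := N) e n → QOrb L (N := N) e m :=
  Quotient.map (fun x => ⟨fun i => x.1 (Fin.castLE h i), IsPE.res L h (hx := x.2)⟩)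
    (by rintro x y ⟨g, hg⟩; exact ⟨g, fun i => hg _⟩)

lemma resQ_comp (e : ℕ → M) {m n p : ℕ} (h1 : m ≤ n) (h2 : n ≤ p)
    (q : QOrb L (N := N) e p) :
    resQ L e h1 (resQ L e h2 q) = resQ L e (h1.trans h2) q := by
  obtain ⟨x, rfl⟩ := Quotient.exists_rep q
  rfl

/-- König's lemma for inverse systems of finite nonempty types over ℕ. -/
lemma konig_chain (Q : ℕ → Type) (hFin : ∀ n, Finite (Q n)) (hNe : ∀ n, Nonempty (Q n))
    (f : ∀ {m n : ℕ}, m ≤ n → Q n → Q m)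
    (hf : ∀ {m n p : ℕ} (h1 : m ≤ n) (h2 : n ≤ p) (x : Q p), f h1 (f h2 x) = f (h1.trans h2) x) :
    ∃ s : ∀ n, Q n, ∀ n, f (Nat.le_succ n) (s (n + 1)) = s n := by
  classical
  haveI := hFin; haveI := hNe
  set Ext : ∀ n, Q n → Prop := fun n x => ∀ m (h : n ≤ m), ∃ z : Q m, f h z = x with hExt
  have base : ∃ x : Q 0, Ext 0 x := by
    set φ : ℕ → Q 0 := fun k => f (Nat.zero_le k) (Classical.arbitrary (Q k)) with hφ
    obtain ⟨x, hx⟩ := Finite.exists_infinite_fiber φ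
    have hxs : (φ ⁻¹' {x}).Infinite := Set.infinite_coe_iff.mp hx
    refine ⟨x, fun m h => ?_⟩
    obtain ⟨b, hb, hmb⟩ := hxs.exists_gt m
    refine ⟨f hmb.le (Classical.arbitrary (Q b)), ?_⟩
    rw [hf]
    exact hb
  have step : ∀ n (x : Q n), Ext n x →
      ∃ x' : Q (n + 1), f (Nat.le_succ n) x' = x ∧ Ext (n + 1) x' := by
    intro n x hx
    choose z hz using fun k => hx (n + 1 + k) (by omega)
    set φ : ℕ → Q (n + 1) := fun k => f (Nat.le_add_right (n + 1) k) (z k) with hφ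
    obtain ⟨x', hx'⟩ := Finite.exists_infinite_fiber φ
    have hxs : (φ ⁻¹' {x'}).Infinite := Set.infinite_coe_iff.mp hx'
    obtain ⟨b0, hb0, _⟩ := hxs.exists_gt 0
    have hstep : f (Nat.le_succ n) x' = x := by
      rw [← hb0, hφ]
      simp only []
      rw [hf]
      exact hz b0
    refine ⟨x', hstep, fun m h => ?_⟩
    obtain ⟨b, hb, hmb⟩ := hxs.exists_gt (m - (n + 1))
    have hm : m ≤ n + 1 + b := by omega
    refine ⟨f hm (z b), ?_⟩
    rw [hf]
    exact hb
  set s : ∀ n, {x : Q n // Ext n x} := fun n =>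
    Nat.rec ⟨base.choose, base.choose_spec⟩
      (fun k ih => ⟨(step k ih.1 ih.2).choose, (step k ih.1 ih.2).choose_spec.2⟩) n with hs
  exact ⟨fun n => (s n).1, fun n => (step n (s n).1 (s n).2).choose_spec.1⟩

end CameronAux

/-- Cameron's theorem: if every finite structure embeddable in `M` embeds in `N`
and `N` is oligomorphic, then `M` embeds in `N`. -/
theorem cameron_age_embedding {L : Language} [L.IsRelational]
    (M N : Type) [Countable M] [Countable N] [L.Structure M] [L.Structure N]
    (hage : ∀ (A : Type) [Fintype A] [L.Structure A],
      Nonempty (A ↪[L] M) → Nonempty (A ↪[L] N))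
    (holig : ∀ n : ℕ, ∃ T : Set (Fin n → N), T.Finite ∧
      ∀ x : Fin n → N, ∃ y ∈ T, ∃ g : N ≃[L] N, ∀ i, g (y i) = x i) :
    Nonempty (M ↪[L] N) := by
  classical
  by_cases hfin : Finite M
  · letI : Fintype M := Fintype.ofFinite M
    exact hage M ⟨Embedding.refl L M⟩
  · haveI : Infinite M := not_finite_iff_infinite.mp hfin
    obtain ⟨d⟩ := nonempty_denumerable M
    let e : ℕ ≃ M := (Denumerable.eqv M).symm
    -- the inverse system of orbits of partial embeddings
    have hNe : ∀ n, Nonempty (QOrb L (N := N) ⇑e n) := by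
      intro n
      obtain ⟨x, hx⟩ := exists_pe L (N := N) ⇑e e.injective hage n
      exact ⟨Quotient.mk _ ⟨x, hx⟩⟩
    have hFin : ∀ n, Finite (QOrb L (N := N) ⇑e n) :=
      fun n => finite_QOrb L ⇑e n holig
    obtain ⟨s, hs⟩ := konig_chain (QOrb L (N := N) ⇑e) hFin hNe
      (fun {m n} h => resQ L ⇑e h) (fun h1 h2 x => resQ_comp L ⇑e h1 h2 x)
    -- build a coherent chain of actual partial embeddings
    have build : ∀ n (c : PEsub L (N := N) ⇑e n), Quotient.mk (peSetoid L (N := N) ⇑e n) c = s n →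
        ∃ c' : PEsub L (N := N) ⇑e (n + 1),
          Quotient.mk (peSetoid L (N := N) ⇑e (n + 1)) c' = s (n + 1) ∧ ∀ i : Fin n, c'.1 i.castSucc = c.1 i := by
      intro n c hc
      set c₁ : PEsub L (N := N) ⇑e (n + 1) := (s (n + 1)).out with hc₁
      have hout : Quotient.mk (peSetoid L (N := N) ⇑e (n + 1)) c₁ = s (n + 1) := Quotient.out_eq _
      have hres : resQ L (N := N) ⇑e (Nat.le_succ n) (s (n + 1)) = s n := hs n
      rw [← hout] at hres
      have hrel := Quotient.exact (hres.trans hc.symm)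
      obtain ⟨g, hg⟩ := hrel
      have hpe : IsPE L (⇑e) (n + 1) (fun i => g (c₁.1 i)) := IsPE.map L (hx := c₁.2) g
      refine ⟨⟨fun i => g (c₁.1 i), hpe⟩, ?_, ?_⟩
      · rw [← hout]
        have hr : (peSetoid L (N := N) ⇑e (n + 1)).r c₁ ⟨fun i => g (c₁.1 i), hpe⟩ :=
          ⟨g, fun i => rfl⟩
        exact (Quotient.sound hr).symm
      · intro i
        exact hg i
    set χ : ∀ n, {c : PEsub L (N := N) ⇑e n // Quotient.mk (peSetoid L (N := N) ⇑e n) c = s n} := fun n =>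
      Nat.rec ⟨(s 0).out, Quotient.out_eq _⟩
        (fun k ih => ⟨(build k ih.1 ih.2).choose, (build k ih.1 ih.2).choose_spec.1⟩) n with hχ
    have χext : ∀ n (i : Fin n), (χ (n + 1)).1.1 i.castSucc = (χ n).1.1 i :=
      fun n i => (build n (χ n).1 (χ n).2).choose_spec.2 i
    have hcoh : ∀ {m n : ℕ} (h : m ≤ n) (i : Fin m),
        (χ n).1.1 (Fin.castLE h i) = (χ m).1.1 i := by
      intro m n h i
      induction n with
      | zero =>
        have : m = 0 := Nat.le_zero.mp h
        subst this; rfl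
      | succ k ih =>
        rcases Nat.lt_or_ge m (k + 1) with hlt | hge
        · have h' : m ≤ k := Nat.lt_succ_iff.mp hlt
          have : (χ (k + 1)).1.1 (Fin.castLE h i) =
              (χ (k + 1)).1.1 (Fin.castSucc (Fin.castLE h' i)) := rfl
          rw [this, χext k (Fin.castLE h' i), ih h']
        · have : m = k + 1 := le_antisymm h hge
          subst this; rfl
    -- the embedding
    set F : M → N := fun m => (χ (e.symm m + 1)).1.1 (Fin.last _) with hF
    have hFval : ∀ (m : M) {n : ℕ} (h : e.symm m < n), F m = (χ n).1.1 ⟨e.symm m, h⟩ := by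
      intro m n h
      have := hcoh (Nat.succ_le_of_lt h) (Fin.last (e.symm m))
      rw [hF]
      simp only []
      rw [← this]
      rfl
    have hFinj : Function.Injective F := by
      intro m₁ m₂ hm
      set n := max (e.symm m₁) (e.symm m₂) + 1 with hn
      have h₁ : e.symm m₁ < n := by omega
      have h₂ : e.symm m₂ < n := by omega
      rw [hFval m₁ h₁, hFval m₂ h₂] at hm
      have := (χ n).1.2.1 hm
      have hval : e.symm m₁ = e.symm m₂ := congrArg Fin.val this
      exact e.symm.injective hval
    refine ⟨⟨⟨F, hFinj⟩, fun f => isEmptyElim f, ?_⟩⟩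
    intro k r v
    set n := (Finset.univ.sup fun i => e.symm (v i)) + 1 with hn
    have hlt : ∀ i, e.symm (v i) < n := by
      intro i
      exact Nat.lt_succ_of_le (Finset.le_sup (f := fun i => e.symm (v i)) (Finset.mem_univ i))
    have hFv : ∀ i, F (v i) = (χ n).1.1 ⟨e.symm (v i), hlt i⟩ := fun i => hFval (v i) (hlt i)
    have key := (χ n).1.2.2 r (fun i => ⟨e.symm (v i), hlt i⟩)
    have h1 : (fun j => F (v j)) = fun j => (χ n).1.1 ⟨e.symm (v j), hlt j⟩ := funext hFv
    have h2 : (fun j => e ((⟨e.symm (v j), hlt j⟩ : Fin n) : ℕ)) = v := by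
      funext j; exact e.apply_symm_apply (v j)
    show Structure.RelMap r ((fun m => F m) ∘ v) ↔ Structure.RelMap r v
    have : (fun m => F m) ∘ v = fun j => F (v j) := rfl
    rw [this, h1]
    rw [h2] at key
    exact key
end
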